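/- The transformed Nosé-Hoover equations θ' = 1 − εα sinθ cosθ, τ' = −2ετα sin²θ, α' = ε(2τ sin²θ − 1) preserve the volume form e^{−τ−α²/2} dθ dτ dα; equivalently, the divergence of the product of e^{−τ−α²/2} with the vector field vanishes identically. -/

import Mathlib

/-- The transformed Nosé-Hoover equations θ' = 1 − εα sinθ cosθ,
τ' = −2ετα sin²θ, α' = ε(2τ sin²θ − 1) preserve the volume form
e^{−τ−α²/2} dθ dτ dα: the divergence of e^{−τ−α²/2} times the vector field
vanishes identically. -/
theorem stmt_12 (ε : ℝ) (θ τ α : ℝ) :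
    deriv (fun x => Real.exp (-τ - α ^ 2 / 2) *
        (1 - ε * α * Real.sin x * Real.cos x)) θ +
    deriv (fun x => Real.exp (-x - α ^ 2 / 2) *
        (-(2 * ε * x * α * Real.sin θ ^ 2))) τ +
    deriv (fun x => Real.exp (-τ - x ^ 2 / 2) *
        (ε * (2 * τ * Real.sin θ ^ 2 - 1))) α = 0 := by
  have h1 : HasDerivAt (fun x => Real.exp (-τ - α ^ 2 / 2) *
      (1 - ε * α * Real.sin x * Real.cos x))
      (Real.exp (-τ - α ^ 2 / 2) *
        (-(ε * α * (Real.cos θ * Real.cos θ + Real.sin θ * (-Real.sin θ))))) θ := by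
    have hs := (Real.hasDerivAt_sin θ)
    have hc := (Real.hasDerivAt_cos θ)
    have := (((hs.const_mul (ε * α)).mul hc))
    have h := (hasDerivAt_const θ (1:ℝ)).sub this
    have := h.const_mul (Real.exp (-τ - α ^ 2 / 2))
    exact this.congr_deriv (by ring)
  have h2 : HasDerivAt (fun x => Real.exp (-x - α ^ 2 / 2) *
      (-(2 * ε * x * α * Real.sin θ ^ 2)))
      (-Real.exp (-τ - α ^ 2 / 2) * (-(2 * ε * τ * α * Real.sin θ ^ 2))
        + Real.exp (-τ - α ^ 2 / 2) * (-(2 * ε * α * Real.sin θ ^ 2))) τ := by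
    have he : HasDerivAt (fun x : ℝ => Real.exp (-x - α ^ 2 / 2))
        (-Real.exp (-τ - α ^ 2 / 2)) τ := by
      have hi : HasDerivAt (fun x : ℝ => -x - α ^ 2 / 2) (-1) τ :=
        (hasDerivAt_id τ).neg.sub_const _
      have := (Real.hasDerivAt_exp (-τ - α ^ 2 / 2)).comp τ hi
      exact this.congr_deriv (by simp)
    have hg : HasDerivAt (fun x : ℝ => -(2 * ε * x * α * Real.sin θ ^ 2))
        (-(2 * ε * α * Real.sin θ ^ 2)) τ := by
      have h' : (fun x : ℝ => -(2 * ε * x * α * Real.sin θ ^ 2))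
          = fun x => -(2 * ε * Real.sin θ ^ 2 * α) * x := by ext x; ring
      rw [h']
      have := (hasDerivAt_id τ).const_mul (-(2 * ε * Real.sin θ ^ 2 * α))
      exact this.congr_deriv (by ring)
    have := he.mul hg
    exact this.congr_deriv (by ring)
  have h3 : HasDerivAt (fun x : ℝ => Real.exp (-τ - x ^ 2 / 2) *
      (ε * (2 * τ * Real.sin θ ^ 2 - 1)))
      ((-α) * Real.exp (-τ - α ^ 2 / 2) * (ε * (2 * τ * Real.sin θ ^ 2 - 1))) α := by
    have hi : HasDerivAt (fun x : ℝ => -τ - x ^ 2 / 2) (-α) α := by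
      have : HasDerivAt (fun x : ℝ => x ^ 2 / 2) α α := by
        simpa using ((hasDerivAt_pow 2 α).div_const 2)
      exact ((hasDerivAt_const α (-τ)).sub this).congr_deriv (by ring)
    have he := (Real.hasDerivAt_exp (-τ - α ^ 2 / 2)).comp α hi
    have := he.mul_const (ε * (2 * τ * Real.sin θ ^ 2 - 1))
    exact this.congr_deriv (by ring)
  rw [h1.deriv, h2.deriv, h3.deriv]
  have hs := Real.sin_sq_add_cos_sq θ
  linear_combination (-(Real.exp (-τ - α ^ 2 / 2) * ε * α)) * hs
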